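/- Let d and m be positive integers and let U_1, …, U_d and V_1, …, V_d be unitaries on ℂ^m satisfying U_x V_y = V_y U_x for all x, y. Then there exists a unitary W on ℂ^m ⊗ ℂ^d such that for every density matrix ρ on ℂ^m: Tr_B(W(ρ ⊗ (1/d)I_d)W†) = (1/d²) ∑_{x=1}^d ∑_{y=1}^d V_y U_x ρ U_x† V_y† and Tr_A(W(ρ ⊗ (1/d)I_d)W†) = (1/d)I_d. (A quantum catalyst in the d-dimensional maximally mixed state can implement two independent consecutive mutually commuting rank-d random unitary operations.) -/

import Mathlib

open scoped Matrix Kronecker BigOperators Classical ComplexOrder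

/-- A density matrix: positive semidefinite with unit trace. -/
noncomputable def IsDensity {n : Type*} [Fintype n] (ρ : Matrix n n ℂ) : Prop :=
  ρ.PosSemidef ∧ ρ.trace = 1

/-- A unitary matrix. -/
noncomputable def IsUnitary {n : Type*} [Fintype n] [DecidableEq n] (U : Matrix n n ℂ) : Prop :=
  U * Uᴴ = 1 ∧ Uᴴ * U = 1

/-- Partial trace over the first tensor factor. -/
noncomputable def trFst {α β : Type*} [Fintype α] (M : Matrix (α × β) (α × β) ℂ) : Matrix β β ℂ :=
  Matrix.of fun k l => ∑ i, M (i, k) (i, l)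

/-- Partial trace over the second tensor factor. -/
noncomputable def trSnd {α β : Type*} [Fintype β] (M : Matrix (α × β) (α × β) ℂ) : Matrix α α ℂ :=
  Matrix.of fun i j => ∑ k, M (i, k) (j, k)

/-- Partial trace over the third factor of a tripartite system. -/
noncomputable def trThird {α β γ : Type*} [Fintype γ] (M : Matrix (α × β × γ) (α × β × γ) ℂ) :
    Matrix (α × β) (α × β) ℂ :=
  Matrix.of fun p q => ∑ k, M (p.1, p.2, k) (q.1, q.2, k)

/-- von Neumann entropy (base-2), with the convention `0 log 0 = 0`. -/
noncomputable def vnEntropy {n : Type*} [Fintype n] [DecidableEq n] (ρ : Matrix n n ℂ) : ℝ :=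
  if h : ρ.IsHermitian then -∑ i, h.eigenvalues i * Real.logb 2 (h.eigenvalues i) else 0

/-- Largest eigenvalue of a (Hermitian) matrix. -/
noncomputable def maxEig {n : Type*} [Fintype n] [DecidableEq n] (ρ : Matrix n n ℂ) : ℝ :=
  if h : ρ.IsHermitian then ⨆ i, h.eigenvalues i else 0

/-- Min-entropy of a density matrix. -/
noncomputable def minEntropy {n : Type*} [Fintype n] [DecidableEq n] (ρ : Matrix n n ℂ) : ℝ :=
  -Real.logb 2 (maxEig ρ)

/-- Rényi entropy of order `α` (base 2). -/
noncomputable def renyiEntropy {n : Type*} [Fintype n] [DecidableEq n] (α : ℝ)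
    (ρ : Matrix n n ℂ) : ℝ :=
  if h : ρ.IsHermitian then (1 - α)⁻¹ * Real.logb 2 (∑ i, h.eigenvalues i ^ α) else 0

/-- Partial transpose over the first tensor factor. -/
noncomputable def ptFst {α β : Type*} (U : Matrix (α × β) (α × β) ℂ) : Matrix (α × β) (α × β) ℂ :=
  Matrix.of fun p q => U (q.1, p.2) (p.1, q.2)

/-- Swap the two parties of a bipartite matrix. -/
noncomputable def swapParties {α β : Type*} (U : Matrix (α × β) (α × β) ℂ) : Matrix (β × α) (β × α) ℂ :=
  Matrix.of fun p q => U (p.2, p.1) (q.2, q.1)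

/-- `U` is compatible with the catalyst `σ`: there is a unitary `V` on `B` such that
`Tr_A (U (ρ ⊗ σ) U†) = V σ V†` for every density matrix `ρ` on `A`. -/
noncomputable def Compatible {dA dB : ℕ} (U : Matrix (Fin dA × Fin dB) (Fin dA × Fin dB) ℂ)
    (σ : Matrix (Fin dB) (Fin dB) ℂ) : Prop :=
  ∃ V : Matrix (Fin dB) (Fin dB) ℂ, IsUnitary V ∧
    ∀ ρ : Matrix (Fin dA) (Fin dA) ℂ, IsDensity ρ →
      trFst (U * (ρ ⊗ₖ σ) * Uᴴ) = V * σ * Vᴴ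

/-- The unitary `1_m ⊗ U` on `ℂ^m ⊗ ℂ^{dA} ⊗ ℂ^{dB}`, indexed as `(Fin m × Fin dA) × Fin dB`. -/
noncomputable def extUnitary {m dA dB : ℕ} (U : Matrix (Fin dA × Fin dB) (Fin dA × Fin dB) ℂ) :
    Matrix ((Fin m × Fin dA) × Fin dB) ((Fin m × Fin dA) × Fin dB) ℂ :=
  Matrix.of fun p q => if p.1.1 = q.1.1 then U (p.1.2, p.2) (q.1.2, q.2) else 0

namespace Stmt7Aux

open Matrix

lemma orth_sum {d : ℕ} (hd : 0 < d) {ζ : ℂ} (hζ : IsPrimitiveRoot ζ d) (a b : Fin d) :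
    ∑ c : Fin d, ζ ^ ((a : ℕ) * (c : ℕ)) * (ζ ^ ((b : ℕ) * (c : ℕ)))⁻¹ =
      if a = b then (d : ℂ) else 0 := by
  have hζ0 : ζ ≠ 0 := hζ.ne_zero hd.ne'
  have key : ∀ c : Fin d,
      ζ ^ ((a : ℕ) * (c : ℕ)) * (ζ ^ ((b : ℕ) * (c : ℕ)))⁻¹ =
        (ζ ^ (a : ℕ) * (ζ ^ (b : ℕ))⁻¹) ^ (c : ℕ) := by
    intro c
    rw [pow_mul, pow_mul, ← inv_pow, ← mul_pow]
  simp_rw [key]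
  rw [Fin.sum_univ_eq_sum_range (fun c => (ζ ^ (a : ℕ) * (ζ ^ (b : ℕ))⁻¹) ^ c)]
  have h1 : ∀ k : ℕ, (ζ ^ k) ^ d = 1 := by
    intro k
    rw [← pow_mul, mul_comm, pow_mul, hζ.pow_eq_one, one_pow]
  by_cases hab : a = b
  · subst hab
    simp [mul_inv_cancel₀ (pow_ne_zero _ hζ0)]
  · have hne : ζ ^ (a : ℕ) * (ζ ^ (b : ℕ))⁻¹ ≠ 1 := by
      intro h
      apply hab
      rw [← div_eq_mul_inv, div_eq_one_iff_eq (pow_ne_zero _ hζ0)] at h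
      exact Fin.ext (hζ.pow_inj a.isLt b.isLt h)
    have hpow : (ζ ^ (a : ℕ) * (ζ ^ (b : ℕ))⁻¹) ^ d = 1 := by
      rw [mul_pow, h1, one_mul, inv_pow, h1, inv_one]
    rw [geom_sum_eq hne, hpow]
    simp [hab]

noncomputable def E (d : ℕ) (c : Fin d) : Matrix (Fin d) (Fin d) ℂ :=
  Matrix.single c c 1

noncomputable def P (d : ℕ) (ζ : ℂ) (y : Fin d) : Matrix (Fin d) (Fin d) ℂ :=
  Matrix.of fun a b => (d : ℂ)⁻¹ * (ζ ^ ((y : ℕ) * (a : ℕ)) * (ζ ^ ((y : ℕ) * (b : ℕ)))⁻¹)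

lemma E_mul {d : ℕ} (c c' : Fin d) : E d c * E d c' = if c = c' then E d c else 0 := by
  by_cases h : c = c'
  · subst h
    rw [if_pos rfl]
    rw [E, Matrix.single_mul_single_same, one_mul]
  · rw [if_neg h]
    simp [E, Matrix.single_mul_single_of_ne, h]

lemma E_sum {d : ℕ} : ∑ c, E d c = (1 : Matrix (Fin d) (Fin d) ℂ) := by
  ext a b
  rw [Matrix.sum_apply]
  simp only [E, Matrix.single, of_apply, Matrix.one_apply]
  by_cases h : a = b
  · subst h
    rw [Finset.sum_eq_single a (fun c _ hc => if_neg (fun hh => hc hh.1)) (by simp)]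
    simp
  · rw [if_neg h]
    refine Finset.sum_eq_zero fun c _ => if_neg ?_
    rintro ⟨rfl, rfl⟩
    exact h rfl

lemma E_conjT {d : ℕ} (c : Fin d) : (E d c)ᴴ = E d c := by
  ext a b
  simp only [E, conjTranspose_apply, Matrix.single, of_apply, and_comm]
  split <;> simp

lemma P_conjT {d : ℕ} {ζ : ℂ} (hc : (starRingEnd ℂ) ζ = ζ⁻¹) (y : Fin d) :
    (P d ζ y)ᴴ = P d ζ y := by
  ext a b
  simp only [conjTranspose_apply, P, of_apply, star_mul', star_inv₀, star_pow,
    Complex.star_def, hc, star_natCast]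
  rw [inv_pow, inv_pow, inv_inv]
  ring

lemma P_mul {d : ℕ} (hd : 0 < d) {ζ : ℂ} (hζ : IsPrimitiveRoot ζ d) (y y' : Fin d) :
    P d ζ y * P d ζ y' = if y = y' then P d ζ y else 0 := by
  have hd0 : (d : ℂ) ≠ 0 := Nat.cast_ne_zero.mpr hd.ne'
  ext a b
  rw [Matrix.mul_apply]
  simp only [P, of_apply]
  have step : ∀ e : Fin d,
      (d : ℂ)⁻¹ * (ζ ^ ((y : ℕ) * (a : ℕ)) * (ζ ^ ((y : ℕ) * (e : ℕ)))⁻¹) *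
        ((d : ℂ)⁻¹ * (ζ ^ ((y' : ℕ) * (e : ℕ)) * (ζ ^ ((y' : ℕ) * (b : ℕ)))⁻¹)) =
      ((d : ℂ)⁻¹ * (d : ℂ)⁻¹ * (ζ ^ ((y : ℕ) * (a : ℕ)) * (ζ ^ ((y' : ℕ) * (b : ℕ)))⁻¹)) *
        (ζ ^ ((y' : ℕ) * (e : ℕ)) * (ζ ^ ((y : ℕ) * (e : ℕ)))⁻¹) := by
    intro e; ring
  simp_rw [step]
  rw [← Finset.mul_sum, orth_sum hd hζ y' y]
  by_cases h : y = y'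
  · subst h
    rw [if_pos rfl, if_pos rfl]
    simp only [of_apply]
    have hζ0 : ζ ≠ 0 := hζ.ne_zero hd.ne'
    have hb : ζ ^ ((y : ℕ) * (b : ℕ)) ≠ 0 := pow_ne_zero _ hζ0
    field_simp
  · rw [if_neg (fun hh => h hh.symm), if_neg h, mul_zero]
    simp

lemma P_sum {d : ℕ} (hd : 0 < d) {ζ : ℂ} (hζ : IsPrimitiveRoot ζ d) :
    ∑ y, P d ζ y = (1 : Matrix (Fin d) (Fin d) ℂ) := by
  have hd0 : (d : ℂ) ≠ 0 := Nat.cast_ne_zero.mpr hd.ne'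
  ext a b
  rw [Matrix.sum_apply]
  simp only [P, of_apply, Matrix.one_apply]
  rw [← Finset.mul_sum]
  have h2 : ∀ y : Fin d, ζ ^ ((y : ℕ) * (a : ℕ)) * (ζ ^ ((y : ℕ) * (b : ℕ)))⁻¹ =
      ζ ^ ((a : ℕ) * (y : ℕ)) * (ζ ^ ((b : ℕ) * (y : ℕ)))⁻¹ := by
    intro y; rw [mul_comm ((y : ℕ)) ((a : ℕ)), mul_comm ((y : ℕ)) ((b : ℕ))]
  simp_rw [h2]
  rw [orth_sum hd hζ a b]
  by_cases h : a = b
  · simp [h, inv_mul_cancel₀ hd0]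
  · simp [h]

lemma trace_PE {d : ℕ} {ζ : ℂ} (hζ0 : ζ ≠ 0) (y c : Fin d) :
    (P d ζ y * E d c).trace = (d : ℂ)⁻¹ := by
  rw [Matrix.trace]
  rw [Finset.sum_eq_single c
    (fun k _ hk => by simp [E, Matrix.diag_apply, hk])
    (by simp)]
  rw [Matrix.diag_apply, E, Matrix.mul_single_apply_same, mul_one]
  simp only [P, of_apply]
  rw [mul_inv_cancel₀ (pow_ne_zero _ hζ0), mul_one]

lemma kron_conjT {a b : ℕ} (A : Matrix (Fin a) (Fin a) ℂ) (B : Matrix (Fin b) (Fin b) ℂ) :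
    (A ⊗ₖ B)ᴴ = Aᴴ ⊗ₖ Bᴴ := by
  ext ⟨i, k⟩ ⟨j, l⟩
  simp [Matrix.conjTranspose_apply, Matrix.kroneckerMap_apply, star_mul', mul_comm]

lemma kron_sum_right {a b : ℕ} {ι : Type*} (s : Finset ι) (A : Matrix (Fin a) (Fin a) ℂ)
    (B : ι → Matrix (Fin b) (Fin b) ℂ) :
    A ⊗ₖ (∑ i ∈ s, B i) = ∑ i ∈ s, A ⊗ₖ B i := by
  ext ⟨i, k⟩ ⟨j, l⟩
  simp [Matrix.kroneckerMap_apply, Matrix.sum_apply, Finset.mul_sum]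

lemma trSndAux {a b : ℕ} (A : Matrix (Fin a) (Fin a) ℂ) (B : Matrix (Fin b) (Fin b) ℂ) :
    (Matrix.of fun i j => ∑ k, (A ⊗ₖ B) (i, k) (j, k) : Matrix (Fin a) (Fin a) ℂ)
      = B.trace • A := by
  ext i j
  simp [Matrix.kroneckerMap_apply, Matrix.trace, Matrix.diag, ← Finset.mul_sum, mul_comm]

lemma trFstAux {a b : ℕ} (A : Matrix (Fin a) (Fin a) ℂ) (B : Matrix (Fin b) (Fin b) ℂ) :
    (Matrix.of fun k l => ∑ i, (A ⊗ₖ B) (i, k) (i, l) : Matrix (Fin b) (Fin b) ℂ)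
      = A.trace • B := by
  ext k l
  simp [Matrix.kroneckerMap_apply, Matrix.trace, Matrix.diag, Finset.sum_mul]


lemma trSnd_smul {a b : ℕ} (r : ℂ) (M : Matrix (Fin a × Fin b) (Fin a × Fin b) ℂ) :
    trSnd (r • M) = r • trSnd M := by
  ext i j
  simp [trSnd, Finset.mul_sum]

lemma trFst_smul {a b : ℕ} (r : ℂ) (M : Matrix (Fin a × Fin b) (Fin a × Fin b) ℂ) :
    trFst (r • M) = r • trFst M := by
  ext i j
  simp [trFst, Finset.mul_sum]

lemma trSnd_sum {a b : ℕ} {ι : Type*} (s : Finset ι)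
    (f : ι → Matrix (Fin a × Fin b) (Fin a × Fin b) ℂ) :
    trSnd (∑ i ∈ s, f i) = ∑ i ∈ s, trSnd (f i) := by
  ext i j
  simp only [trSnd, of_apply, Matrix.sum_apply]
  rw [Finset.sum_comm]

lemma trFst_sum {a b : ℕ} {ι : Type*} (s : Finset ι)
    (f : ι → Matrix (Fin a × Fin b) (Fin a × Fin b) ℂ) :
    trFst (∑ i ∈ s, f i) = ∑ i ∈ s, trFst (f i) := by
  ext i j
  simp only [trFst, of_apply, Matrix.sum_apply]
  rw [Finset.sum_comm]

lemma trSnd_kron {a b : ℕ} (A : Matrix (Fin a) (Fin a) ℂ) (B : Matrix (Fin b) (Fin b) ℂ) :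
    trSnd (A ⊗ₖ B) = B.trace • A := trSndAux A B

lemma trFst_kron {a b : ℕ} (A : Matrix (Fin a) (Fin a) ℂ) (B : Matrix (Fin b) (Fin b) ℂ) :
    trFst (A ⊗ₖ B) = A.trace • B := trFstAux A B

lemma sum_kron_mul {m d : ℕ} {ι : Type*} [Fintype ι] [DecidableEq ι] (A B : ι → Matrix (Fin m) (Fin m) ℂ)
    (Q : ι → Matrix (Fin d) (Fin d) ℂ)
    (hAB : ∀ i, A i * B i = 1)
    (hQmul : ∀ i j, Q i * Q j = if i = j then Q i else 0)
    (hQsum : ∑ i, Q i = 1) :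
    (∑ i, A i ⊗ₖ Q i) * (∑ i, B i ⊗ₖ Q i) = 1 := by
  rw [Finset.sum_mul_sum]
  have h1 : ∀ i j : ι, (A i ⊗ₖ Q i) * (B j ⊗ₖ Q j) =
      if i = j then (1 : Matrix (Fin m) (Fin m) ℂ) ⊗ₖ Q i else 0 := by
    intro i j
    rw [← Matrix.mul_kronecker_mul, hQmul]
    split
    · next h => subst h; rw [hAB]
    · rw [Matrix.kronecker_zero]
  simp_rw [h1, Finset.sum_ite_eq, Finset.mem_univ, if_pos]
  rw [← kron_sum_right, hQsum, Matrix.one_kronecker_one]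

lemma conj_expand {m d : ℕ} {ι κ : Type*} [Fintype ι] [Fintype κ]
    (A : ι → Matrix (Fin m) (Fin m) ℂ) (B : κ → Matrix (Fin m) (Fin m) ℂ)
    (R : Matrix (Fin m) (Fin m) ℂ)
    (Q : ι → Matrix (Fin d) (Fin d) ℂ) (S : κ → Matrix (Fin d) (Fin d) ℂ)
    (T : Matrix (Fin d) (Fin d) ℂ) :
    (∑ i, A i ⊗ₖ Q i) * (R ⊗ₖ T) * (∑ j, B j ⊗ₖ S j) =
      ∑ i, ∑ j, (A i * R * B j) ⊗ₖ (Q i * T * S j) := by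
  rw [Finset.sum_mul, Finset.sum_mul]
  refine Finset.sum_congr rfl fun i _ => ?_
  rw [← Matrix.mul_kronecker_mul, Finset.mul_sum]
  refine Finset.sum_congr rfl fun j _ => ?_
  rw [← Matrix.mul_kronecker_mul]

lemma trace_PEP {d : ℕ} (hd : 0 < d) {ζ : ℂ} (hζ : IsPrimitiveRoot ζ d) (y c y' : Fin d) :
    (P d ζ y * E d c * P d ζ y').trace = if y = y' then (d : ℂ)⁻¹ else 0 := by
  have hζ0 : ζ ≠ 0 := hζ.ne_zero hd.ne'
  rw [Matrix.trace_mul_cycle, P_mul hd hζ y' y]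
  by_cases h : y = y'
  · subst h
    rw [if_pos rfl, if_pos rfl, trace_PE hζ0]
  · rw [if_neg (fun hh => h hh.symm), if_neg h, Matrix.zero_mul, Matrix.trace_zero]

lemma trace_key {n : Type*} [Fintype n] [DecidableEq n] (A B C ρ : Matrix n n ℂ)
    (hA : Aᴴ * A = 1) (h1 : A * B = B * A) (h2 : A * Cᴴ = Cᴴ * A) :
    (B * A * ρ * Aᴴ * Cᴴ).trace = (Cᴴ * B * ρ).trace := by
  rw [Matrix.trace_mul_comm (B * A * ρ * Aᴴ) Cᴴ]
  have e1 : Cᴴ * (B * A * ρ * Aᴴ) = A * Cᴴ * B * ρ * Aᴴ := by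
    calc Cᴴ * (B * A * ρ * Aᴴ) = (Cᴴ * (B * A)) * (ρ * Aᴴ) := by
          simp only [Matrix.mul_assoc]
      _ = (Cᴴ * (A * B)) * (ρ * Aᴴ) := by rw [h1]
      _ = ((Cᴴ * A) * B) * (ρ * Aᴴ) := by simp only [Matrix.mul_assoc]
      _ = ((A * Cᴴ) * B) * (ρ * Aᴴ) := by rw [h2]
      _ = A * Cᴴ * B * ρ * Aᴴ := by simp only [Matrix.mul_assoc]
  rw [e1, Matrix.trace_mul_comm (A * Cᴴ * B * ρ) Aᴴ]
  calc (Aᴴ * (A * Cᴴ * B * ρ)).trace = ((Aᴴ * A) * (Cᴴ * B * ρ)).trace := by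
        simp only [Matrix.mul_assoc]
    _ = (Cᴴ * B * ρ).trace := by rw [hA, Matrix.one_mul]


end Stmt7Aux

open Stmt7Aux

set_option maxHeartbeats 1600000 in
/-- Corollary 2: a quantum catalyst in the `d`-dimensional maximally mixed state can implement
two independent consecutive mutually commuting rank-`d` random unitary operations. -/
theorem stmt7 {d m : ℕ} (hd : 0 < d) (hm : 0 < m)
    (U V : Fin d → Matrix (Fin m) (Fin m) ℂ)
    (hU : ∀ x, IsUnitary (U x)) (hV : ∀ y, IsUnitary (V y))
    (hcomm : ∀ x y, U x * V y = V y * U x) :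
    ∃ W : Matrix (Fin m × Fin d) (Fin m × Fin d) ℂ, IsUnitary W ∧
      ∀ ρ : Matrix (Fin m) (Fin m) ℂ, IsDensity ρ →
        trSnd (W * (ρ ⊗ₖ ((d : ℂ)⁻¹ • (1 : Matrix (Fin d) (Fin d) ℂ))) * Wᴴ) =
          ((d : ℂ) ^ 2)⁻¹ • ∑ x, ∑ y, V y * U x * ρ * (U x)ᴴ * (V y)ᴴ ∧
        trFst (W * (ρ ⊗ₖ ((d : ℂ)⁻¹ • (1 : Matrix (Fin d) (Fin d) ℂ))) * Wᴴ) =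
          (d : ℂ)⁻¹ • (1 : Matrix (Fin d) (Fin d) ℂ) := by
  classical
  have hd0 : (d : ℂ) ≠ 0 := Nat.cast_ne_zero.mpr hd.ne'
  set ζ : ℂ := Complex.exp (2 * Real.pi * Complex.I / d) with hζdef
  have hζ : IsPrimitiveRoot ζ d := Complex.isPrimitiveRoot_exp d hd.ne'
  have hζ0 : ζ ≠ 0 := hζ.ne_zero hd.ne'
  have hnorm : ‖ζ‖ = 1 := Complex.norm_eq_one_of_pow_eq_one hζ.pow_eq_one hd.ne'
  have hconj : (starRingEnd ℂ) ζ = ζ⁻¹ := (Complex.inv_eq_conj hnorm).symm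
  have hUVH : ∀ x y, U x * (V y)ᴴ = (V y)ᴴ * U x := by
    intro x y
    calc U x * (V y)ᴴ = ((V y)ᴴ * V y) * (U x * (V y)ᴴ) := by rw [(hV y).2, Matrix.one_mul]
      _ = (V y)ᴴ * ((V y * U x) * (V y)ᴴ) := by simp only [Matrix.mul_assoc]
      _ = (V y)ᴴ * ((U x * V y) * (V y)ᴴ) := by rw [hcomm]
      _ = (V y)ᴴ * (U x * (V y * (V y)ᴴ)) := by simp only [Matrix.mul_assoc]
      _ = (V y)ᴴ * U x := by rw [(hV y).1, Matrix.mul_one]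
  set W₁ : Matrix (Fin m × Fin d) (Fin m × Fin d) ℂ := ∑ c, U c ⊗ₖ E d c with hW₁def
  set W₂ : Matrix (Fin m × Fin d) (Fin m × Fin d) ℂ := ∑ y, V y ⊗ₖ P d ζ y with hW₂def
  have hW1H : W₁ᴴ = ∑ c, (U c)ᴴ ⊗ₖ E d c := by
    rw [hW₁def, Matrix.conjTranspose_sum]
    exact Finset.sum_congr rfl fun c _ => by rw [kron_conjT, E_conjT]
  have hW2H : W₂ᴴ = ∑ y, (V y)ᴴ ⊗ₖ P d ζ y := by
    rw [hW₂def, Matrix.conjTranspose_sum]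
    exact Finset.sum_congr rfl fun y _ => by rw [kron_conjT, P_conjT hconj]
  have hW1U : W₁ * W₁ᴴ = 1 ∧ W₁ᴴ * W₁ = 1 := by
    constructor
    · rw [hW1H, hW₁def]
      exact sum_kron_mul _ _ _ (fun c => (hU c).1) E_mul E_sum
    · rw [hW1H, hW₁def]
      exact sum_kron_mul _ _ _ (fun c => (hU c).2) E_mul E_sum
  have hW2U : W₂ * W₂ᴴ = 1 ∧ W₂ᴴ * W₂ = 1 := by
    constructor
    · rw [hW2H, hW₂def]
      exact sum_kron_mul _ _ _ (fun y => (hV y).1) (P_mul hd hζ) (P_sum hd hζ)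
    · rw [hW2H, hW₂def]
      exact sum_kron_mul _ _ _ (fun y => (hV y).2) (P_mul hd hζ) (P_sum hd hζ)
  refine ⟨W₂ * W₁, ⟨?_, ?_⟩, ?_⟩
  · rw [Matrix.conjTranspose_mul]
    calc W₂ * W₁ * (W₁ᴴ * W₂ᴴ) = W₂ * (W₁ * W₁ᴴ) * W₂ᴴ := by simp only [Matrix.mul_assoc]
      _ = 1 := by rw [hW1U.1, Matrix.mul_one, hW2U.1]
  · rw [Matrix.conjTranspose_mul]
    calc W₁ᴴ * W₂ᴴ * (W₂ * W₁) = W₁ᴴ * (W₂ᴴ * W₂) * W₁ := by simp only [Matrix.mul_assoc]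
      _ = 1 := by rw [hW2U.2, Matrix.mul_one, hW1U.2]
  intro ρ hρ
  have hW : W₂ * W₁ = ∑ p : Fin d × Fin d, (V p.1 * U p.2) ⊗ₖ (P d ζ p.1 * E d p.2) := by
    rw [hW₂def, hW₁def, Finset.sum_mul_sum, Fintype.sum_prod_type]
    exact Finset.sum_congr rfl fun y _ => Finset.sum_congr rfl fun c _ =>
      (Matrix.mul_kronecker_mul _ _ _ _).symm
  have hWH : (W₂ * W₁)ᴴ =
      ∑ q : Fin d × Fin d, ((U q.1)ᴴ * (V q.2)ᴴ) ⊗ₖ (E d q.1 * P d ζ q.2) := by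
    rw [Matrix.conjTranspose_mul, hW1H, hW2H, Finset.sum_mul_sum, Fintype.sum_prod_type]
    exact Finset.sum_congr rfl fun c _ => Finset.sum_congr rfl fun y _ =>
      (Matrix.mul_kronecker_mul _ _ _ _).symm
  have hsmul : ρ ⊗ₖ ((d : ℂ)⁻¹ • (1 : Matrix (Fin d) (Fin d) ℂ)) =
      (d : ℂ)⁻¹ • (ρ ⊗ₖ (1 : Matrix (Fin d) (Fin d) ℂ)) := Matrix.kronecker_smul _ _ _
  have hM : W₂ * W₁ * (ρ ⊗ₖ ((d : ℂ)⁻¹ • (1 : Matrix (Fin d) (Fin d) ℂ))) * (W₂ * W₁)ᴴ =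
      (d : ℂ)⁻¹ • ∑ y, ∑ c, ∑ y',
        (V y * U c * ρ * ((U c)ᴴ * (V y')ᴴ)) ⊗ₖ (P d ζ y * E d c * P d ζ y') := by
    rw [hsmul, Matrix.mul_smul, Matrix.smul_mul, hWH, hW,
      conj_expand (fun p : Fin d × Fin d => V p.1 * U p.2)
        (fun q : Fin d × Fin d => (U q.1)ᴴ * (V q.2)ᴴ) ρ
        (fun p : Fin d × Fin d => P d ζ p.1 * E d p.2)
        (fun q : Fin d × Fin d => E d q.1 * P d ζ q.2) 1]
    congr 1
    rw [Fintype.sum_prod_type]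
    refine Finset.sum_congr rfl fun y _ => ?_
    refine Finset.sum_congr rfl fun c _ => ?_
    rw [Fintype.sum_prod_type]
    have hterm : ∀ c' y' : Fin d,
        ((V y * U c) * ρ * ((U c')ᴴ * (V y')ᴴ)) ⊗ₖ
          ((P d ζ y * E d c) * 1 * (E d c' * P d ζ y')) =
        if c = c' then
          (V y * U c * ρ * ((U c)ᴴ * (V y')ᴴ)) ⊗ₖ (P d ζ y * E d c * P d ζ y') else 0 := by
      intro c' y'
      have h2 : (P d ζ y * E d c) * 1 * (E d c' * P d ζ y') =
          if c = c' then P d ζ y * E d c * P d ζ y' else 0 := by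
        rw [Matrix.mul_one]
        calc (P d ζ y * E d c) * (E d c' * P d ζ y')
            = P d ζ y * ((E d c * E d c') * P d ζ y') := by simp only [Matrix.mul_assoc]
          _ = if c = c' then P d ζ y * E d c * P d ζ y' else 0 := by
              rw [E_mul]
              by_cases h : c = c'
              · rw [if_pos h, if_pos h]
                simp only [Matrix.mul_assoc]
              · rw [if_neg h, if_neg h, Matrix.zero_mul, Matrix.mul_zero]
      rw [h2]
      by_cases h : c = c'
      · subst h
        rw [if_pos rfl, if_pos rfl]
      · rw [if_neg h, if_neg h, Matrix.kronecker_zero]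
    simp_rw [hterm]
    rw [Finset.sum_comm]
    simp [Finset.sum_ite_eq]
  constructor
  · rw [hM, trSnd_smul]
    simp_rw [trSnd_sum, trSnd_kron, trace_PEP hd hζ, ite_smul, zero_smul,
      Finset.sum_ite_eq, Finset.mem_univ, if_pos]
    rw [show ((d : ℂ) ^ 2)⁻¹ = (d : ℂ)⁻¹ * (d : ℂ)⁻¹ by rw [sq, mul_inv], ← smul_smul]
    congr 1
    simp_rw [← Finset.smul_sum]
    congr 1
    rw [Finset.sum_comm]
    refine Finset.sum_congr rfl fun c _ => Finset.sum_congr rfl fun y _ => ?_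
    simp only [Matrix.mul_assoc]
  · rw [hM, trFst_smul]
    simp_rw [trFst_sum, trFst_kron]
    have key : ∀ y c y' : Fin d,
        (V y * U c * ρ * ((U c)ᴴ * (V y')ᴴ)).trace = ((V y')ᴴ * V y * ρ).trace := by
      intro y c y'
      have h := trace_key (U c) (V y) (V y') ρ (hU c).2 (hcomm c y) (hUVH c y')
      simp only [Matrix.mul_assoc] at h ⊢
      exact h
    simp_rw [key]
    have hswap : ∀ y : Fin d,
        ∑ c : Fin d, ∑ y' : Fin d,
            ((V y')ᴴ * V y * ρ).trace • (P d ζ y * E d c * P d ζ y') =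
          ∑ y' : Fin d, ∑ c : Fin d,
            ((V y')ᴴ * V y * ρ).trace • (P d ζ y * E d c * P d ζ y') := fun y =>
      Finset.sum_comm
    simp_rw [hswap]
    have hc : ∀ y y' : Fin d,
        ∑ c, ((V y')ᴴ * V y * ρ).trace • (P d ζ y * E d c * P d ζ y') =
          ((V y')ᴴ * V y * ρ).trace • (if y = y' then P d ζ y else 0) := by
      intro y y'
      rw [← Finset.smul_sum]
      congr 1
      have h3 : ∑ c, P d ζ y * E d c * P d ζ y' = P d ζ y * (∑ c, E d c) * P d ζ y' := by
        rw [Finset.mul_sum, Finset.sum_mul]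
      rw [h3, E_sum, Matrix.mul_one, P_mul hd hζ]
    simp_rw [hc, smul_ite, smul_zero, Finset.sum_ite_eq, Finset.mem_univ, if_pos]
    have hone : ∀ y : Fin d, ((V y)ᴴ * V y * ρ).trace = 1 := by
      intro y
      rw [(hV y).2, Matrix.one_mul, hρ.2]
    simp_rw [hone, one_smul, P_sum hd hζ]
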